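/- Let R be a finite commutative chain ring with maximal ideal ⟨γ⟩, nilpotency index s, and residue field of size q. For every nonzero ideal I of R, the sum of the homogeneous weights of the elements of I equals the cardinality of I: Σ_{x ∈ I} wt_Hom(x) = |I|. -/

import Mathlib

open scoped BigOperators Classical

/-- The normalized homogeneous weight on a finite chain ring with maximal ideal `⟨γ⟩`,
nilpotency index `s` and residue field of size `q`. -/
noncomputable def wtHom {R : Type*} [CommRing R] (γ : R) (s q : ℕ) (x : R) : ℚ :=
  if x = 0 then 0
  else if x ∈ Ideal.span {γ ^ (s - 1)} then (q : ℚ) / ((q : ℚ) - 1)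
  else 1

/-- Homogeneous weight of a vector: the sum of the weights of its coordinates. -/
noncomputable def wtHomV {R : Type*} [CommRing R] (γ : R) (s q : ℕ) {n : ℕ}
    (v : Fin n → R) : ℚ :=
  ∑ i, wtHom γ s q (v i)

/-- Hamming weight of a vector: the number of nonzero coordinates. -/
noncomputable def hWt {R : Type*} [Zero R] {n : ℕ} (v : Fin n → R) : ℕ :=
  Nat.card {i : Fin n // v i ≠ 0}

/-- `K` is the rank of the code `C`: the least cardinality of a generating set of `C`
as an `R`-module. -/
def IsCodeRank {R : Type*} [CommRing R] {n : ℕ} (C : Submodule R (Fin n → R)) (K : ℕ) : Prop :=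
  IsLeast {k : ℕ | ∃ S : Finset (Fin n → R),
    S.card = k ∧ Submodule.span R (S : Set (Fin n → R)) = C} K

/-- The socle of a code: the codewords all of whose coordinates lie in `⟨γ^(s-1)⟩`. -/
def socleCode {R : Type*} [CommRing R] (γ : R) (s : ℕ) {n : ℕ}
    (C : Submodule R (Fin n → R)) : Submodule R (Fin n → R) :=
  C ⊓ Submodule.pi Set.univ (fun _ : Fin n => Ideal.span {γ ^ (s - 1)})

/-- On a nonzero ideal of a finite chain ring, the homogeneous weight has average 1:
the sum of the weights of the elements equals the cardinality of the ideal. -/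
theorem sum_wtHom_ideal {R : Type*} [CommRing R] [IsLocalRing R] [Fintype R]
    (γ : R) (s q : ℕ) (hs : 1 ≤ s)
    (hmax : IsLocalRing.maximalIdeal R = Ideal.span {γ})
    (hnil : γ ^ s = 0) (hnil' : γ ^ (s - 1) ≠ 0)
    (hq : Nat.card (R ⧸ IsLocalRing.maximalIdeal R) = q)
    (I : Ideal R) (hI : I ≠ ⊥) :
    ∑ᶠ x ∈ (I : Set R), wtHom γ s q x = (Nat.card I : ℚ) := by
  classical
  set J : Ideal R := Ideal.span {γ ^ (s - 1)} with hJ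
  -- key divisibility lemma
  have key : ∀ m : ℕ, ∀ x : R, x ≠ 0 → x ∈ Ideal.span {γ ^ (s - m)} →
      γ ^ (s - 1) ∈ Ideal.span {x} := by
    intro m
    induction m with
    | zero =>
      intro x hx hxm
      rw [Nat.sub_zero, Ideal.mem_span_singleton, hnil] at hxm
      exact absurd (zero_dvd_iff.mp hxm) hx
    | succ m ih =>
      intro x hx hxm
      obtain ⟨c, hc⟩ := Ideal.mem_span_singleton.mp hxm
      by_cases hcu : IsUnit c
      · obtain ⟨u, rfl⟩ := hcu
        have h1 : γ ^ (s - (m + 1)) = x * (↑u⁻¹ : R) := by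
          rw [hc, mul_assoc, Units.mul_inv, mul_one]
        have h2 : γ ^ (s - (m + 1)) ∈ Ideal.span {x} :=
          Ideal.mem_span_singleton.mpr ⟨(↑u⁻¹ : R), h1⟩
        have h3 : γ ^ (s - 1) = γ ^ (s - (m + 1)) * γ ^ ((s - 1) - (s - (m + 1))) := by
          rw [← pow_add, Nat.add_sub_cancel' (by omega)]
        rw [h3]
        exact Ideal.mul_mem_right _ _ h2
      · have hcm : c ∈ Ideal.span {γ} := by
          rw [← hmax]; exact hcu
        obtain ⟨d, hd⟩ := Ideal.mem_span_singleton.mp hcm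
        apply ih x hx
        rw [Ideal.mem_span_singleton]
        have : x = γ ^ (s - (m + 1) + 1) * d := by
          rw [hc, hd, pow_succ]; ring
        exact dvd_trans (pow_dvd_pow γ (by omega)) ⟨d, this⟩
  -- J ≤ I
  have hJI : J ≤ I := by
    obtain ⟨x, hxI, hx0⟩ := Submodule.exists_mem_ne_zero_of_ne_bot hI
    have hx : γ ^ (s - 1) ∈ Ideal.span {x} := by
      apply key s x hx0
      rw [Nat.sub_self, pow_zero, Ideal.span_singleton_one]
      trivial
    rw [hJ, Ideal.span_le]
    intro y hy
    simp only [Set.mem_singleton_iff] at hy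
    subst hy
    exact (Ideal.span_le.mpr (by simpa using hxI)) hx
  -- card of J is q
  have hcardJ : Nat.card J = q := by
    set f := LinearMap.toSpanSingleton R R (γ ^ (s - 1)) with hf
    have hker : LinearMap.ker f = IsLocalRing.maximalIdeal R := by
      apply le_antisymm
      · apply IsLocalRing.le_maximalIdeal
        intro h
        have h1 : f 1 = 0 := by rw [← LinearMap.mem_ker, h]; trivial
        simp [hf, LinearMap.toSpanSingleton_apply] at h1
        exact hnil' h1
      · rw [hmax, Ideal.span_le]
        intro y hy
        simp only [Set.mem_singleton_iff] at hy
        subst hy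
        rw [SetLike.mem_coe, LinearMap.mem_ker, hf, LinearMap.toSpanSingleton_apply,
          smul_eq_mul, ← pow_succ', Nat.sub_add_cancel hs]
        exact hnil
    have hrange : LinearMap.range f = J := by
      rw [hJ, Ideal.span, LinearMap.span_singleton_eq_range]
    have e : Nat.card (R ⧸ LinearMap.ker f) = Nat.card (LinearMap.range f) :=
      Nat.card_congr f.quotKerEquivRange.toEquiv
    rw [hker, hrange, hq] at e
    exact e.symm
  -- q ≥ 2
  have hq2 : 2 ≤ q := by
    rw [← hq]
    have hnt : Nontrivial (R ⧸ IsLocalRing.maximalIdeal R) :=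
      Submodule.Quotient.nontrivial_iff.mpr
        (IsLocalRing.maximalIdeal.isMaximal R).ne_top
    exact Finite.one_lt_card
  have hq1 : ((q : ℚ) - 1) ≠ 0 := by
    have : (2 : ℚ) ≤ (q : ℚ) := by exact_mod_cast hq2
    linarith
  -- finset setup
  set F : Finset R := (I : Set R).toFinset with hF
  set A : Finset R := F.filter (fun x => x ∈ J) with hA
  set B : Finset R := F.filter (fun x => x ∉ J) with hB
  have hAJ : A = (J : Set R).toFinset := by
    ext x
    simp only [hA, hF, Finset.mem_filter, Set.mem_toFinset, SetLike.mem_coe]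
    exact ⟨fun h => h.2, fun h => ⟨hJI h, h⟩⟩
  have hAcard : A.card = q := by
    rw [hAJ, Set.toFinset_card, ← Nat.card_eq_fintype_card, ← hcardJ]
    exact Nat.card_congr (Equiv.refl _)
  have h0A : (0 : R) ∈ A := by
    rw [hAJ, Set.mem_toFinset]; exact J.zero_mem
  have hAsum : ∑ x ∈ A, wtHom γ s q x = (q : ℚ) := by
    rw [← Finset.add_sum_erase _ _ h0A]
    have hw0 : wtHom γ s q 0 = 0 := by simp [wtHom]
    rw [hw0, zero_add]
    have hconst : ∀ x ∈ A.erase 0, wtHom γ s q x = (q : ℚ) / ((q : ℚ) - 1) := by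
      intro x hx
      obtain ⟨hx0, hxA⟩ := Finset.mem_erase.mp hx
      have hxJ : x ∈ J := (Finset.mem_filter.mp hxA).2
      rw [hJ] at hxJ
      simp [wtHom, hx0, hxJ]
    rw [Finset.sum_congr rfl hconst, Finset.sum_const,
      Finset.card_erase_of_mem h0A, hAcard, nsmul_eq_mul,
      Nat.cast_sub (by omega : 1 ≤ q), Nat.cast_one]
    field_simp
  have hBsum : ∑ x ∈ B, wtHom γ s q x = (B.card : ℚ) := by
    have hconst : ∀ x ∈ B, wtHom γ s q x = 1 := by
      intro x hx
      obtain ⟨hxF, hxJ⟩ := Finset.mem_filter.mp hx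
      have hx0 : x ≠ 0 := fun h => hxJ (h ▸ J.zero_mem)
      have hxJ' : x ∉ Ideal.span {γ ^ (s - 1)} := by rw [← hJ]; exact hxJ
      simp [wtHom, hx0, hxJ']
    rw [Finset.sum_congr rfl hconst, Finset.sum_const, nsmul_eq_mul, mul_one]
  have hFcard : F.card = Nat.card I := by
    rw [hF, Set.toFinset_card, ← Nat.card_eq_fintype_card]
    exact Nat.card_congr (Equiv.refl _)
  have hABcard : A.card + B.card = F.card := Finset.card_filter_add_card_filter_not _
  have hqle : q ≤ Nat.card I := by omega
  have hsplit : ∑ x ∈ F, wtHom γ s q x = ∑ x ∈ A, wtHom γ s q x + ∑ x ∈ B, wtHom γ s q x :=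
    (Finset.sum_filter_add_sum_filter_not F _ _).symm
  have hfin : ∑ᶠ x ∈ (I : Set R), wtHom γ s q x = ∑ x ∈ F, wtHom γ s q x := by
    rw [hF, ← Set.coe_toFinset (I : Set R), finsum_mem_coe_finset, Set.coe_toFinset]
  rw [hfin, hsplit, hAsum, hBsum]
  have hBc : B.card = Nat.card I - q := by omega
  rw [hBc, Nat.cast_sub hqle]
  ring
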